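/- Let R be a commutative local ring with maximal ideal m, let S be a commutative R-algebra that is flat as an R-module, and let M be an R-module of finite length. Then, computing lengths in ℕ∞, the length of the S-module S ⊗_R M equals the length of the S-module S/mS multiplied by the length of the R-module M. -/

import Mathlib

open TensorProduct

/-- The length of a module over a ring, valued in `ℕ∞`: the supremum of the lengths of
chains of submodules (i.e. the Krull dimension of the lattice of submodules). -/
noncomputable def moduleLength (R M : Type*) [Semiring R] [AddCommGroup M] [Module R M] :
    ℕ∞ :=
  WithBot.unbotD 0 (Order.krullDim (Submodule R M))

section OrderAux

variable {α : Type*} [Preorder α]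

lemma aux_height_add_one_le {x y : α} (h : x < y) :
    Order.height x + 1 ≤ Order.height y := by
  have hne : Nonempty {p : LTSeries α // p.last = x} := ⟨⟨RelSeries.singleton _ x, rfl⟩⟩
  rw [Order.height_eq_iSup_last_eq, iSup_subtype', ENat.iSup_add]
  apply iSup_le
  rintro ⟨p, hp⟩
  have := Order.length_le_height_last (p := p.snoc y (hp ▸ h))
  simpa using this

end OrderAux

section LengthAux

variable {R M : Type*} [Semiring R] [AddCommGroup M] [Module R M]

lemma moduleLength_eq_iSup (R M : Type*) [Semiring R] [AddCommGroup M] [Module R M] :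
    moduleLength R M = ⨆ (p : LTSeries (Submodule R M)), (p.length : ℕ∞) := by
  rw [moduleLength, Order.krullDim_eq_iSup_length, WithBot.unbotD_coe]

lemma height_le_moduleLength (x : Submodule R M) :
    Order.height x ≤ moduleLength R M := by
  rw [moduleLength_eq_iSup, Order.height_eq_iSup_last_eq]
  exact iSup₂_le fun p _ => le_iSup_of_le p le_rfl

lemma moduleLength_congr {N : Type*} [AddCommGroup N] [Module R N] (e : M ≃ₗ[R] N) :
    moduleLength R M = moduleLength R N := by
  unfold moduleLength
  rw [Order.krullDim_eq_of_orderIso (Submodule.orderIsoMapComap e)]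

lemma moduleLength_of_subsingleton [Subsingleton M] : moduleLength R M = 0 := by
  have h1 : Order.krullDim (Submodule R M) = 0 :=
    le_antisymm Order.krullDim_nonpos_of_subsingleton Order.krullDim_nonneg
  rw [moduleLength, h1]
  rfl

lemma moduleLength_simple {R M : Type*} [Ring R] [AddCommGroup M] [Module R M]
    [IsSimpleModule R M] : moduleLength R M = 1 := by
  rw [moduleLength_eq_iSup]
  apply le_antisymm
  · apply iSup_le
    intro p
    have hp : p.length ≤ 1 := by
      by_contra hc
      push_neg at hc
      have h01 : p ⟨0, by omega⟩ < p ⟨1, by omega⟩ := p.strictMono (by simp [Fin.lt_def])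
      have h12 : p ⟨1, by omega⟩ < p ⟨2, by omega⟩ := p.strictMono (by simp [Fin.lt_def])
      rcases eq_bot_or_eq_top (p ⟨1, by omega⟩) with h | h
      · rw [h] at h01; exact (not_lt_bot h01)
      · rw [h] at h12; exact (not_top_lt h12)
    exact_mod_cast Nat.cast_le.mpr hp
  · refine le_iSup_of_le ((RelSeries.singleton _ (⊥ : Submodule R M)).snoc ⊤ (by exact (bot_lt_top : (⊥ : Submodule R M) < ⊤))) ?_
    simp [RelSeries.snoc, RelSeries.append]

end LengthAux

section AddAux

variable {R M : Type*} [Ring R] [AddCommGroup M] [Module R M]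


lemma chain_le_key (N : Submodule R M) (p : LTSeries (Submodule R M)) :
    (p.length : ℕ∞) ≤ Order.height (Submodule.comap N.subtype p.last)
      + Order.height (Submodule.map N.mkQ p.last) := by
  generalize hn : p.length = n
  induction n generalizing p with
  | zero => simp
  | succ n ih =>
    have hlen : p.eraseLast.length = n := by simp [hn]
    have hlast : p.eraseLast.last < p.last :=
      p.eraseLast_last_rel_last (by omega)
    have key := ih p.eraseLast hlen
    set A := p.eraseLast.last with hA
    set B := p.last with hB
    have hcle : Submodule.comap N.subtype A ≤ Submodule.comap N.subtype B :=
      Submodule.comap_mono hlast.le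
    have hmle : Submodule.map N.mkQ A ≤ Submodule.map N.mkQ B :=
      Submodule.map_mono hlast.le
    have hor : Submodule.comap N.subtype A < Submodule.comap N.subtype B ∨
        Submodule.map N.mkQ A < Submodule.map N.mkQ B := by
      rcases hcle.lt_or_eq with h | h
      · exact Or.inl h
      rcases hmle.lt_or_eq with h' | h'
      · exact Or.inr h'
      exfalso
      have hinf : N ⊓ A = N ⊓ B := by
        have := congrArg (Submodule.map N.subtype) h
        rwa [Submodule.map_comap_subtype, Submodule.map_comap_subtype] at this
      have hsup : N ⊔ A = N ⊔ B := by
        have := congrArg (Submodule.comap N.mkQ) h'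
        rwa [Submodule.comap_map_mkQ, Submodule.comap_map_mkQ] at this
      have h1 : (A ⊔ N) ⊓ B = A ⊔ N ⊓ B := sup_inf_assoc_of_le N hlast.le
      have h2 : A ⊔ N = B ⊔ N := by rw [sup_comm A N, sup_comm B N, hsup]
      have h3 : N ⊓ B = N ⊓ A := hinf.symm
      rw [h2, h3] at h1
      rw [inf_eq_right.mpr le_sup_left, sup_eq_left.mpr inf_le_right] at h1
      exact hlast.ne' h1
    rw [Nat.cast_succ]
    rcases hor with h | h
    · calc (n : ℕ∞) + 1
          ≤ (Order.height (Submodule.comap N.subtype A)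
            + Order.height (Submodule.map N.mkQ A)) + 1 := add_le_add_left key 1
        _ = (Order.height (Submodule.comap N.subtype A) + 1)
            + Order.height (Submodule.map N.mkQ A) := by ring
        _ ≤ _ := add_le_add (aux_height_add_one_le h) (Order.height_mono hmle)
    · calc (n : ℕ∞) + 1
          ≤ (Order.height (Submodule.comap N.subtype A)
            + Order.height (Submodule.map N.mkQ A)) + 1 := add_le_add_left key 1
        _ = Order.height (Submodule.comap N.subtype A)
            + (Order.height (Submodule.map N.mkQ A) + 1) := by ring
        _ ≤ _ := add_le_add (Order.height_mono hcle) (aux_height_add_one_le h)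

lemma moduleLength_additive (N : Submodule R M) :
    moduleLength R M = moduleLength R N + moduleLength R (M ⧸ N) := by
  apply le_antisymm
  · rw [moduleLength_eq_iSup R M]
    apply iSup_le
    intro p
    exact (chain_le_key N p).trans
      (add_le_add (height_le_moduleLength _) (height_le_moduleLength _))
  · rw [moduleLength_eq_iSup R N, moduleLength_eq_iSup R (M ⧸ N)]
    apply ENat.iSup_add_iSup_le
    intro p q
    rw [moduleLength_eq_iSup]
    have hm1 : Monotone (fun A : Submodule R N => Submodule.map N.subtype A) :=
      fun _ _ h => Submodule.map_mono h
    have hm2 : Monotone (fun A : Submodule R (M ⧸ N) => Submodule.comap N.mkQ A) :=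
      fun _ _ h => Submodule.comap_mono h
    have hf1 : StrictMono (fun A : Submodule R N => Submodule.map N.subtype A) :=
      hm1.strictMono_of_injective
        (Submodule.map_injective_of_injective N.injective_subtype)
    have hf2 : StrictMono (fun A : Submodule R (M ⧸ N) => Submodule.comap N.mkQ A) :=
      hm2.strictMono_of_injective
        (Submodule.comap_injective_of_surjective (Submodule.mkQ_surjective N))
    set p' := p.map _ hf1 with hp'
    set q' := q.map _ hf2 with hq'
    have hconn : p'.last ≤ q'.head := by
      rw [hp', hq', LTSeries.last_map, LTSeries.head_map]
      refine le_trans (Submodule.map_subtype_le N _) ?_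
      have : N = Submodule.comap N.mkQ ⊥ := by rw [Submodule.comap_bot, Submodule.ker_mkQ]
      exact this.le.trans (Submodule.comap_mono bot_le)
    rcases hconn.lt_or_eq with h | h
    · refine le_iSup_of_le (p'.append q' h) ?_
      have : (p'.append q' h).length = p.length + q.length + 1 := by
        simp [RelSeries.append_length, hp', hq']
      rw [this]
      push_cast
      calc (p.length : ℕ∞) + q.length ≤ (p.length : ℕ∞) + q.length + 1 := le_self_add
        _ = _ := by ring
    · refine le_iSup_of_le (p'.smash q' h) ?_
      have : (p'.smash q' h).length = p.length + q.length := by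
        simp [RelSeries.smash_length, hp', hq']
      rw [this]
      push_cast
      exact le_rfl

end AddAux

section TensorQuot

variable (R S : Type*) [CommRing R] [CommRing S] [Algebra R S] (I : Ideal R)

lemma tq_hg : ∀ a ∈ I,
    ((Ideal.Quotient.mkₐ R (I.map (algebraMap R S))).comp (Algebra.ofId R S)) a = 0 := by
  intro a ha
  show Ideal.Quotient.mk (I.map (algebraMap R S)) (algebraMap R S a) = 0
  exact Ideal.Quotient.eq_zero_iff_mem.mpr (Ideal.mem_map_of_mem _ ha)

/-- The canonical map `S ⊗[R] (R ⧸ I) →ₐ[S] S ⧸ I.map (algebraMap R S)`. -/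
noncomputable def tqPsi : (S ⊗[R] (R ⧸ I)) →ₐ[S] (S ⧸ I.map (algebraMap R S)) :=
  Algebra.TensorProduct.lift (Ideal.Quotient.mkₐ S (I.map (algebraMap R S)))
    (Ideal.Quotient.liftₐ I ((Ideal.Quotient.mkₐ R (I.map (algebraMap R S))).comp
      (Algebra.ofId R S)) (tq_hg R S I))
    (fun _ _ => Commute.all _ _)

lemma tq_psi_tmul (s : S) (r : R) :
    tqPsi R S I (s ⊗ₜ[R] (Ideal.Quotient.mk I r))
      = Ideal.Quotient.mk (I.map (algebraMap R S)) (s * algebraMap R S r) := by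
  rw [tqPsi, Algebra.TensorProduct.lift_tmul]
  rw [map_mul]
  rfl

lemma tq_hker : ∀ a ∈ I.map (algebraMap R S),
    (Algebra.TensorProduct.includeLeft : S →ₐ[S] S ⊗[R] (R ⧸ I)) a = 0 := by
  have hker : I.map (algebraMap R S) ≤ RingHom.ker (Algebra.TensorProduct.includeLeft
      (R := R) (S := S) (A := S) (B := R ⧸ I)).toRingHom := by
    rw [Ideal.map_le_iff_le_comap]
    intro x hx
    rw [Ideal.mem_comap, RingHom.mem_ker]
    show algebraMap R S x ⊗ₜ[R] (1 : R ⧸ I) = 0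
    rw [Algebra.algebraMap_eq_smul_one, smul_tmul]
    have : x • (1 : R ⧸ I) = Ideal.Quotient.mk I x := by
      rw [Algebra.smul_def, mul_one, Ideal.Quotient.algebraMap_eq]
    rw [this, Ideal.Quotient.eq_zero_iff_mem.mpr hx, tmul_zero]
  exact fun a ha => hker ha

/-- The canonical map `S ⧸ I.map (algebraMap R S) →ₐ[S] S ⊗[R] (R ⧸ I)`. -/
noncomputable def tqChi : (S ⧸ I.map (algebraMap R S)) →ₐ[S] (S ⊗[R] (R ⧸ I)) :=
  Ideal.Quotient.liftₐ (I.map (algebraMap R S)) Algebra.TensorProduct.includeLeft (tq_hker R S I)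

lemma tq_chi_mk (s : S) :
    tqChi R S I (Ideal.Quotient.mk (I.map (algebraMap R S)) s) = s ⊗ₜ[R] (1 : R ⧸ I) := by
  rw [tqChi, Ideal.Quotient.liftₐ_apply]
  rfl

/-- The `S`-algebra isomorphism `S ⊗[R] (R ⧸ I) ≃ₐ[S] S ⧸ I.map (algebraMap R S)`. -/
noncomputable def tensorQuotAlgEquiv :
    (S ⊗[R] (R ⧸ I)) ≃ₐ[S] (S ⧸ I.map (algebraMap R S)) := by
  refine AlgEquiv.ofAlgHom (tqPsi R S I) (tqChi R S I) ?_ ?_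
  · refine AlgHom.ext fun x => ?_
    obtain ⟨s, rfl⟩ := Ideal.Quotient.mk_surjective x
    rw [AlgHom.comp_apply, tq_chi_mk]
    have : ((1 : R ⧸ I)) = Ideal.Quotient.mk I 1 := rfl
    rw [this, tq_psi_tmul, map_one, mul_one]
    rfl
  · refine AlgHom.ext fun x => ?_
    induction x using TensorProduct.induction_on with
    | zero => simp
    | add x y hx hy => simp only [map_add, hx, hy, AlgHom.coe_id, id_eq] at *
    | tmul s y =>
      obtain ⟨r, rfl⟩ := Ideal.Quotient.mk_surjective y
      rw [AlgHom.comp_apply, tq_psi_tmul, tq_chi_mk, AlgHom.coe_id, id_eq]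
      rw [mul_comm, ← Algebra.smul_def, smul_tmul]
      congr 1
      rw [Algebra.smul_def, mul_one, Ideal.Quotient.algebraMap_eq]

end TensorQuot

/-- Remark 3.10 of the paper: if `R` is a local ring with maximal ideal `m`, `S` is a flat
commutative `R`-algebra and `M` is an `R`-module of finite length, then
`length_S (S ⊗_R M) = length_S (S/mS) * length_R M`. -/
theorem stmt_10 (R S M : Type*) [CommRing R] [IsLocalRing R]
    [CommRing S] [Algebra R S] [Module.Flat R S]
    [AddCommGroup M] [Module R M]
    (hM : IsFiniteLength R M) :
    moduleLength S (S ⊗[R] M) =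
      moduleLength S (S ⧸ (IsLocalRing.maximalIdeal R).map (algebraMap R S)) *
        moduleLength R M := by
  induction hM with
  | of_subsingleton =>
    rename_i M _ _ _
    have h0 : ∀ x : S ⊗[R] M, x = 0 := fun x => by
      induction x using TensorProduct.induction_on with
      | zero => rfl
      | tmul s m => rw [Subsingleton.elim m 0, tmul_zero]
      | add x y hx hy => rw [hx, hy, add_zero]
    have : Subsingleton (S ⊗[R] M) := ⟨fun a b => (h0 a).trans (h0 b).symm⟩
    rw [moduleLength_of_subsingleton (M := S ⊗[R] M), moduleLength_of_subsingleton (M := M),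
      mul_zero]
  | of_simple_quotient hN ih =>
    rename_i M _ _ N _
    have hinj : Function.Injective (N.subtype.baseChange S) := by
      rw [LinearMap.baseChange_eq_ltensor]
      exact Module.Flat.lTensor_preserves_injective_linearMap N.subtype N.injective_subtype
    have hsurj : Function.Surjective (N.mkQ.baseChange S) := by
      rw [LinearMap.baseChange_eq_ltensor]
      exact LinearMap.lTensor_surjective S (Submodule.mkQ_surjective N)
    have hexact : Function.Exact (N.subtype.baseChange S) (N.mkQ.baseChange S) := by
      rw [LinearMap.baseChange_eq_ltensor, LinearMap.baseChange_eq_ltensor]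
      exact lTensor_exact S (LinearMap.exact_subtype_mkQ N) (Submodule.mkQ_surjective N)
    set K : Submodule S (S ⊗[R] M) := LinearMap.range (N.subtype.baseChange S) with hKdef
    have e1 : (S ⊗[R] ↥N) ≃ₗ[S] ↥K := LinearEquiv.ofInjective _ hinj
    have hker : K = LinearMap.ker (N.mkQ.baseChange S) := (LinearMap.exact_iff.mp hexact).symm
    have e2 : ((S ⊗[R] M) ⧸ K) ≃ₗ[S] (S ⊗[R] (M ⧸ N)) :=
      (Submodule.quotEquivOfEq _ _ hker).trans
        ((N.mkQ.baseChange S).quotKerEquivOfSurjective hsurj)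
    obtain ⟨I, hImax, ⟨eS⟩⟩ := isSimpleModule_iff_quot_maximal.mp
      (inferInstance : IsSimpleModule R (M ⧸ N))
    have hI : I = IsLocalRing.maximalIdeal R := IsLocalRing.eq_maximalIdeal hImax
    subst hI
    have e4 : (S ⊗[R] (M ⧸ N)) ≃ₗ[S]
        (S ⊗[R] (R ⧸ IsLocalRing.maximalIdeal R)) := LinearEquiv.baseChange R S _ _ eS
    have e5 : (S ⊗[R] (R ⧸ IsLocalRing.maximalIdeal R)) ≃ₗ[S]
        (S ⧸ (IsLocalRing.maximalIdeal R).map (algebraMap R S)) :=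
      (tensorQuotAlgEquiv R S (IsLocalRing.maximalIdeal R)).toLinearEquiv
    have hT : moduleLength S (S ⊗[R] M) = moduleLength S (S ⊗[R] ↥N)
        + moduleLength S (S ⧸ (IsLocalRing.maximalIdeal R).map (algebraMap R S)) := by
      rw [moduleLength_additive K, ← moduleLength_congr e1,
        moduleLength_congr (e2.trans (e4.trans e5))]
    have hM' : moduleLength R M = moduleLength R ↥N + 1 := by
      rw [moduleLength_additive N, moduleLength_simple (R := R) (M := M ⧸ N)]
    rw [hT, ih, hM', mul_add, mul_one]
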